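/- Let p, q : Fin n → ℝ be probability distributions. If p_j > q_j then √(p_j(λ p_j + (1−λ) q_j)) ≥ q_j + √λ (p_j − q_j), for any λ ∈ [0,1]. -/
import Mathlib

theorem sqrt_mix_ge_of_gt (pj qj l : ℝ) (hp : 0 ≤ pj) (hq : 0 ≤ qj)
    (hgt : pj > qj) (hl0 : 0 ≤ l) (hl1 : l ≤ 1) :
    Real.sqrt (pj * (l * pj + (1 - l) * qj)) ≥ qj + Real.sqrt l * (pj - qj) := by
  have hs0 : 0 ≤ Real.sqrt l := Real.sqrt_nonneg l
  have hs1 : Real.sqrt l ≤ 1 := by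
    rw [show (1:ℝ) = Real.sqrt 1 by simp]
    exact Real.sqrt_le_sqrt hl1
  have hsq : Real.sqrt l ^ 2 = l := Real.sq_sqrt hl0
  have hrhs : 0 ≤ qj + Real.sqrt l * (pj - qj) := add_nonneg hq (mul_nonneg hs0 (sub_nonneg.mpr hgt.le))
  rw [ge_iff_le, show qj + Real.sqrt l * (pj - qj) = Real.sqrt ((qj + Real.sqrt l * (pj - qj))^2) by
    rw [Real.sqrt_sq hrhs]]
  apply Real.sqrt_le_sqrt
  have key : pj * (l * pj + (1 - l) * qj) - (qj + Real.sqrt l * (pj - qj)) ^ 2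
      = qj * (pj - qj) * (1 - Real.sqrt l) ^ 2 := by linear_combination (pj * qj - pj ^ 2) * hsq
  nlinarith [mul_nonneg (mul_nonneg hq (sub_nonneg.mpr hgt.le)) (sq_nonneg (1 - Real.sqrt l))]
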